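/- (Theorem 3, dynamic programming approach.) Fix n ≥ 1 and a horizon N ≥ 1. Let α, β, γ, ρ, λ†, δ_max > 0 and C(0),…,C(N−1) > 0. For each i ∈ {1,…,n} let A_i ∈ ℝ^{d×d} with ‖A_i‖ ≤ α, B_i ∈ ℝ^{d×m} with ‖B_i‖ ≤ β, x_i(0) ∈ ℝ^d with ‖x_i(0)‖ ≤ γ, let Q_i, R_i be symmetric positive definite with ‖Q_i‖ ≤ δ_max, and let H_i be symmetric with H_i ≥ ρI. Let λ_0,…,λ_{N−1} > 0 and define, for each i, the Riccati matrices by P_{i,N} = Q_i and P_{i,k} = A_iᵀP_{i,k+1}A_i + Q_i − A_iᵀP_{i,k+1}B_i ( B_iᵀP_{i,k+1}B_i + R_i + λ_k H_i )^{−1} B_iᵀP_{i,k+1}A_i; the controls by u_i(k) = −( B_iᵀP_{i,k+1}B_i + R_i + λ_k H_i )^{−1} B_iᵀP_{i,k+1}A_i x_i(k); and the states by x_i(k+1) = A_i x_i(k) + B_i u_i(k). Suppose the balance conditions Σ_{i=1}^{n} u_i(k)ᵀ H_i u_i(k) = C(k) hold for all k ∈ {0,…,N−1}. If δ_max · Σ_{t=1}^{N}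 γ α^{2t−1} ≤ (√(C(0)ρ)/(nβ)) λ†, and for every k ∈ {1,…,N−1}, δ_max · Σ_{t=k+1}^{N} [ γ α^{2t−k−1} + β Σ_{j=0}^{k−1} √(C(j)/ρ) α^{2t−j−k−2} ] ≤ (√(C(k)ρ)/(nβ)) λ†, then λ_k ≤ λ† for every k ∈ {0,…,N−1}. -/

import Mathlib

open Finset Matrix
open scoped RealInnerProductSpace

noncomputable def matNorm {d m : ℕ} (M : Matrix (Fin d) (Fin m) ℝ) : ℝ :=
  ‖LinearMap.toContinuousLinearMap (Matrix.toEuclideanLin M)‖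

namespace Stmt11Aux

variable {a b c : ℕ}

lemma matNorm_nonneg (M : Matrix (Fin a) (Fin b) ℝ) : 0 ≤ matNorm M := norm_nonneg _

lemma norm_apply_le (M : Matrix (Fin a) (Fin b) ℝ) (x : EuclideanSpace ℝ (Fin b)) :
    ‖Matrix.toEuclideanLin M x‖ ≤ matNorm M * ‖x‖ := by
  simpa [matNorm] using (LinearMap.toContinuousLinearMap (Matrix.toEuclideanLin M)).le_opNorm x

lemma toEuclideanLin_mul (M : Matrix (Fin a) (Fin b) ℝ) (N : Matrix (Fin b) (Fin c) ℝ)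
    (v : EuclideanSpace ℝ (Fin c)) :
    Matrix.toEuclideanLin (M * N) v = Matrix.toEuclideanLin M (Matrix.toEuclideanLin N v) := by
  simp [Matrix.toEuclideanLin_apply, Matrix.mulVec_mulVec]

lemma conjT_eq_transpose (M : Matrix (Fin a) (Fin b) ℝ) : Mᴴ = Mᵀ := by
  ext i j; simp [Matrix.conjTranspose_apply]

lemma inner_transpose (M : Matrix (Fin a) (Fin b) ℝ) (y : EuclideanSpace ℝ (Fin a))
    (z : EuclideanSpace ℝ (Fin b)) :
    ⟪Matrix.toEuclideanLin Mᵀ y, z⟫ = ⟪y, Matrix.toEuclideanLin M z⟫ := by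
  rw [← conjT_eq_transpose, Matrix.toEuclideanLin_conjTranspose_eq_adjoint,
    LinearMap.adjoint_inner_left]

lemma inner_psd_nonneg {T : Matrix (Fin b) (Fin b) ℝ} (hT : T.PosSemidef)
    (v : EuclideanSpace ℝ (Fin b)) : 0 ≤ ⟪v, Matrix.toEuclideanLin T v⟫ := by
  have := hT.dotProduct_mulVec_nonneg (WithLp.ofLp v)
  simpa [EuclideanSpace.inner_eq_star_dotProduct, dotProduct_comm (T *ᵥ WithLp.ofLp v)] using this

end Stmt11Aux

namespace Stmt11Aux

lemma inner_sq_le {T : Matrix (Fin b) (Fin b) ℝ} (hT : T.PosSemidef)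
    (y z : EuclideanSpace ℝ (Fin b)) :
    ⟪y, Matrix.toEuclideanLin T z⟫ * ⟪y, Matrix.toEuclideanLin T z⟫
      ≤ ⟪y, Matrix.toEuclideanLin T y⟫ * ⟪z, Matrix.toEuclideanLin T z⟫ := by
  obtain ⟨S, hS, rfl⟩ : ∃ S : Matrix (Fin b) (Fin b) ℝ, S.PosSemidef ∧ S * S = T :=
    open scoped MatrixOrder in
    ⟨CFC.sqrt T, (CFC.sqrt_nonneg T).posSemidef, CFC.sqrt_mul_sqrt_self T hT.nonneg⟩
  have key : ∀ v w : EuclideanSpace ℝ (Fin b),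
      ⟪v, Matrix.toEuclideanLin (S * S) w⟫
        = ⟪Matrix.toEuclideanLin S v, Matrix.toEuclideanLin S w⟫ := by
    intro v w
    rw [toEuclideanLin_mul, ← inner_transpose S v (Matrix.toEuclideanLin S w),
      show Sᵀ = S by rw [← conjT_eq_transpose, hS.1]]
  rw [key, key, key]
  exact real_inner_mul_inner_self_le _ _

lemma inner_abs_le {T : Matrix (Fin b) (Fin b) ℝ} (hT : T.PosSemidef) {cT : ℝ}
    (h0 : 0 ≤ cT)
    (hc : ∀ v : EuclideanSpace ℝ (Fin b), ⟪v, Matrix.toEuclideanLin T v⟫ ≤ cT * ‖v‖ ^ 2)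
    (y z : EuclideanSpace ℝ (Fin b)) :
    |⟪y, Matrix.toEuclideanLin T z⟫| ≤ cT * ‖y‖ * ‖z‖ := by
  have hyy := inner_psd_nonneg hT y
  have hzz := inner_psd_nonneg hT z
  have hy := hc y
  have hz := hc z
  have hsq := inner_sq_le hT y z
  have hq : (0:ℝ) ≤ cT * ‖y‖ * ‖z‖ := by positivity
  rw [abs_le]
  constructor <;> nlinarith [norm_nonneg y, norm_nonneg z, sq_nonneg (‖y‖*‖z‖)]

end Stmt11Aux

namespace Stmt11Aux

lemma posDef_smul {c : ℝ} (hc : 0 < c) {M : Matrix (Fin b) (Fin b) ℝ} (hM : M.PosDef) :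
    (c • M).PosDef := by
  constructor
  · show (c • M)ᴴ = c • M
    rw [conjT_eq_transpose, Matrix.transpose_smul,
      show Mᵀ = M by rw [← conjT_eq_transpose, hM.1]]
  · exact (hM.smul hc).2

lemma posDef_of_sub_psd {ρ : ℝ} (hρ : 0 < ρ) {M : Matrix (Fin b) (Fin b) ℝ}
    (h : (M - ρ • (1 : Matrix (Fin b) (Fin b) ℝ)).PosSemidef) : M.PosDef := by
  have h1 : (ρ • (1 : Matrix (Fin b) (Fin b) ℝ)).PosDef := posDef_smul hρ Matrix.PosDef.one
  have := h.add h1.posSemidef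
  simp only [sub_add_cancel] at this
  refine Matrix.PosDef.of_dotProduct_mulVec_pos this.1 fun v hv => ?_
  have h2 := h.dotProduct_mulVec_nonneg v
  have h3 : (star v) ⬝ᵥ ((ρ • (1 : Matrix (Fin b) (Fin b) ℝ)) *ᵥ v) = ρ * ((star v) ⬝ᵥ v) := by
    simp [Matrix.smul_mulVec, dotProduct_smul]
  have h4 : 0 < (star v) ⬝ᵥ v := by
    have := Matrix.dotProduct_star_self_pos_iff (v := v)
    rw [this]; exact hv
  have h5 : (star v) ⬝ᵥ ((M - ρ • (1 : Matrix (Fin b) (Fin b) ℝ)) *ᵥ v)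
      = (star v) ⬝ᵥ (M *ᵥ v) - ρ * ((star v) ⬝ᵥ v) := by
    rw [Matrix.sub_mulVec, dotProduct_sub, h3]
  rw [h5] at h2
  nlinarith

end Stmt11Aux

namespace Stmt11Aux

lemma psd_transpose_mul_mul {T : Matrix (Fin a) (Fin a) ℝ} (hT : T.PosSemidef)
    (W : Matrix (Fin a) (Fin b) ℝ) : (Wᵀ * T * W).PosSemidef := by
  have := hT.conjTranspose_mul_mul_same W
  rwa [conjT_eq_transpose] at this

lemma completion_aux (A : Matrix (Fin a) (Fin a) ℝ) (B : Matrix (Fin a) (Fin b) ℝ)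
    (P Q : Matrix (Fin a) (Fin a) ℝ) (S M Mi : Matrix (Fin b) (Fin b) ℝ)
    (G K : Matrix (Fin b) (Fin a) ℝ)
    (hM : M = Bᵀ * P * B + S) (hG : G = Bᵀ * P * A) (hGt : Gᵀ = Aᵀ * P * B)
    (hMit : Miᵀ = Mi) (h1 : M * Mi = 1) (h2 : Mi * M = 1) (hK : K = -(Mi * G)) :
    Aᵀ * P * A + Q - Aᵀ * P * B * Mi * G
      = Q + (A + B * K)ᵀ * P * (A + B * K) + Kᵀ * S * K := by
  have hKt : Kᵀ = -(Gᵀ * Mi) := by rw [hK, Matrix.transpose_neg, Matrix.transpose_mul, hMit]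
  have hS' : S = M - Bᵀ * P * B := by rw [hM]; abel
  have step1 : (A + B * K)ᵀ * P * (A + B * K)
      = Aᵀ * P * A + (Aᵀ * P * B) * K + Kᵀ * (Bᵀ * P * A) + Kᵀ * (Bᵀ * P * B) * K := by
    rw [Matrix.transpose_add, Matrix.transpose_mul]
    simp only [Matrix.add_mul, Matrix.mul_add, Matrix.mul_assoc]
    abel
  have step2 : Kᵀ * S * K = Kᵀ * M * K - Kᵀ * (Bᵀ * P * B) * K := by
    rw [hS', Matrix.mul_sub, Matrix.sub_mul]
  have c2 : Kᵀ * M * K = Gᵀ * Mi * G := by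
    rw [hKt, hK, Matrix.neg_mul, Matrix.neg_mul, Matrix.mul_neg, neg_neg,
      Matrix.mul_assoc Gᵀ Mi M, h2, Matrix.mul_one, Matrix.mul_assoc]
  have c3 : (Aᵀ * P * B) * K = -(Gᵀ * Mi * G) := by
    rw [← hGt, hK, Matrix.mul_neg, Matrix.mul_assoc]
  have c4 : Kᵀ * (Bᵀ * P * A) = -(Gᵀ * Mi * G) := by
    rw [← hG, hKt, Matrix.neg_mul]
  have c5 : Aᵀ * P * B * Mi * G = Gᵀ * Mi * G := by rw [← hGt]
  rw [step1, step2, c2, c3, c4, c5]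
  abel

lemma riccati_step {A : Matrix (Fin a) (Fin a) ℝ} {B : Matrix (Fin a) (Fin b) ℝ}
    {P Q : Matrix (Fin a) (Fin a) ℝ} {S : Matrix (Fin b) (Fin b) ℝ}
    (hP : P.PosSemidef) (hQ : Q.PosSemidef) (hS : S.PosDef) :
    (Aᵀ * P * A + Q - Aᵀ * P * B * (Bᵀ * P * B + S)⁻¹ * (Bᵀ * P * A)).PosSemidef := by
  have hBPB : (Bᵀ * P * B).PosSemidef := psd_transpose_mul_mul hP B
  have hM : (Bᵀ * P * B + S).PosDef := Matrix.PosDef.posSemidef_add hBPB hS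
  have hdet : IsUnit (Bᵀ * P * B + S).det := (Matrix.isUnit_iff_isUnit_det _).mp hM.isUnit
  have hPt : Pᵀ = P := by rw [← conjT_eq_transpose, hP.1]
  have hMt : (Bᵀ * P * B + S)ᵀ = Bᵀ * P * B + S := by rw [← conjT_eq_transpose, hM.1]
  have hMit : ((Bᵀ * P * B + S)⁻¹)ᵀ = (Bᵀ * P * B + S)⁻¹ := by
    rw [Matrix.transpose_nonsing_inv, hMt]
  have hGt : (Bᵀ * P * A)ᵀ = Aᵀ * P * B := by
    simp [Matrix.transpose_mul, hPt, Matrix.mul_assoc]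
  have key := completion_aux A B P Q S (Bᵀ * P * B + S) (Bᵀ * P * B + S)⁻¹
    (Bᵀ * P * A) (-((Bᵀ * P * B + S)⁻¹ * (Bᵀ * P * A))) rfl rfl hGt hMit
    (Matrix.mul_nonsing_inv _ hdet) (Matrix.nonsing_inv_mul _ hdet) rfl
  rw [key]
  exact (hQ.add (psd_transpose_mul_mul hP _)).add (psd_transpose_mul_mul hS.posSemidef _)

end Stmt11Aux

namespace Stmt11Aux

lemma toEuclideanLin_one' (v : EuclideanSpace ℝ (Fin b)) :
    Matrix.toEuclideanLin (1 : Matrix (Fin b) (Fin b) ℝ) v = v := by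
  simp [Matrix.toEuclideanLin_apply]

lemma ck_succ (δmax a : ℝ) (t : ℕ) :
    δmax * ∑ s ∈ Finset.range (t + 2), a ^ (2 * s)
      = δmax * (∑ s ∈ Finset.range (t + 1), a ^ (2 * s)) * a ^ 2 + δmax := by
  rw [Finset.sum_range_succ']
  have h1 : ∀ s, a ^ (2 * (s + 1)) = a ^ (2 * s) * a ^ 2 := by
    intro s; ring
  simp only [h1, ← Finset.sum_mul]
  ring

end Stmt11Aux

namespace Stmt11Aux

lemma inner_transpose' (M : Matrix (Fin a) (Fin b) ℝ) (y : EuclideanSpace ℝ (Fin b))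
    (z : EuclideanSpace ℝ (Fin a)) :
    ⟪y, Matrix.toEuclideanLin Mᵀ z⟫ = ⟪Matrix.toEuclideanLin M y, z⟫ := by
  rw [real_inner_comm, inner_transpose, real_inner_comm]

end Stmt11Aux

set_option maxHeartbeats 2000000 in
open Stmt11Aux in
/-- Theorem 3, dynamic programming approach: under the stated bounds on
`δmax`, the equilibrium prices defined through the finite-horizon LQR (Riccati) recursion
are socially resilient at every time step: `λ_k ≤ λ†` for all `k < N`. -/
theorem stmt_11 {d m : ℕ} (n N : ℕ) (hn : 1 ≤ n) (hN : 1 ≤ N)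
    (α β γ ρ lamDag δmax : ℝ)
    (hα : 0 < α) (hβ : 0 < β) (hγ : 0 < γ) (hρ : 0 < ρ)
    (hlamDag : 0 < lamDag) (hδmax : 0 < δmax)
    (C : ℕ → ℝ) (hC : ∀ k, k < N → 0 < C k)
    (A : Fin n → Matrix (Fin d) (Fin d) ℝ) (hA : ∀ i, matNorm (A i) ≤ α)
    (B : Fin n → Matrix (Fin d) (Fin m) ℝ) (hB : ∀ i, matNorm (B i) ≤ β)
    (Q : Fin n → Matrix (Fin d) (Fin d) ℝ) (hQ : ∀ i, (Q i).PosDef)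
    (hQn : ∀ i, matNorm (Q i) ≤ δmax)
    (R : Fin n → Matrix (Fin m) (Fin m) ℝ) (hR : ∀ i, (R i).PosDef)
    (H : Fin n → Matrix (Fin m) (Fin m) ℝ) (hHsym : ∀ i, (H i).IsHermitian)
    (hHρ : ∀ i, (H i - ρ • (1 : Matrix (Fin m) (Fin m) ℝ)).PosSemidef)
    (lam : ℕ → ℝ) (hlam : ∀ k, k < N → 0 < lam k)
    (P : Fin n → ℕ → Matrix (Fin d) (Fin d) ℝ)
    (hPN : ∀ i, P i N = Q i)
    (hPrec : ∀ i, ∀ k, k < N → P i k = (A i)ᵀ * P i (k + 1) * A i + Q i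
      - (A i)ᵀ * P i (k + 1) * B i
        * ((B i)ᵀ * P i (k + 1) * B i + R i + lam k • H i)⁻¹
        * ((B i)ᵀ * P i (k + 1) * A i))
    (x : Fin n → ℕ → EuclideanSpace ℝ (Fin d)) (hx0 : ∀ i, ‖x i 0‖ ≤ γ)
    (u : Fin n → ℕ → EuclideanSpace ℝ (Fin m))
    (hu : ∀ i, ∀ k, k < N → u i k
      = - Matrix.toEuclideanLin
            (((B i)ᵀ * P i (k + 1) * B i + R i + lam k • H i)⁻¹
              * ((B i)ᵀ * P i (k + 1) * A i)) (x i k))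
    (hxdyn : ∀ i, ∀ k, k < N →
      x i (k + 1) = Matrix.toEuclideanLin (A i) (x i k) + Matrix.toEuclideanLin (B i) (u i k))
    (hbal : ∀ k, k < N → ∑ i, ⟪u i k, Matrix.toEuclideanLin (H i) (u i k)⟫ = C k)
    (hcond0 : δmax * ∑ t ∈ Icc 1 N, γ * α ^ (2 * t - 1)
      ≤ (Real.sqrt (C 0 * ρ) / (n * β)) * lamDag)
    (hcondk : ∀ k, 1 ≤ k → k < N →
      δmax * ∑ t ∈ Icc (k + 1) N,
        (γ * α ^ (2 * t - k - 1)
          + β * ∑ j ∈ range k, Real.sqrt (C j / ρ) * α ^ (2 * t - j - k - 2))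
      ≤ (Real.sqrt (C k * ρ) / (n * β)) * lamDag) :
    ∀ k, k < N → lam k ≤ lamDag := by
  have hαnn : 0 ≤ α := hα.le
  have hHpd : ∀ i, (H i).PosDef := fun i => posDef_of_sub_psd hρ (hHρ i)
  have hSpd : ∀ i k, k < N → (R i + lam k • H i).PosDef := fun i k hk =>
    Matrix.PosDef.add_posSemidef (hR i) (posDef_smul (hlam k hk) (hHpd i)).posSemidef
  -- positive semidefiniteness of the Riccati matrices
  have hPsd0 : ∀ t, ∀ i, (P i (N - t)).PosSemidef := by
    intro t
    induction t with
    | zero => intro i; simpa [hPN i] using (hQ i).posSemidef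
    | succ t ih =>
      intro i
      by_cases hle : t + 1 ≤ N
      · have hk : N - (t + 1) < N := by omega
        have hk1 : N - (t + 1) + 1 = N - t := by omega
        have hP' : (P i (N - (t + 1) + 1)).PosSemidef := by rw [hk1]; exact ih i
        rw [hPrec i _ hk]
        rw [show (B i)ᵀ * P i (N - (t+1) + 1) * B i + R i + lam (N - (t+1)) • H i
            = (B i)ᵀ * P i (N - (t+1) + 1) * B i + (R i + lam (N - (t+1)) • H i) from
          add_assoc _ _ _]
        exact riccati_step hP' (hQ i).posSemidef (hSpd i _ hk)
      · rw [show N - (t + 1) = N - t by omega]; exact ih i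
  have hPsd : ∀ k, k ≤ N → ∀ i, (P i k).PosSemidef := by
    intro k hk i
    have := hPsd0 (N - k) i
    rwa [show N - (N - k) = k by omega] at this
  -- quadratic form bound for Q
  have hQb : ∀ i (v : EuclideanSpace ℝ (Fin d)),
      ⟪v, Matrix.toEuclideanLin (Q i) v⟫ ≤ δmax * ‖v‖ ^ 2 := by
    intro i v
    have h1 := real_inner_le_norm v (Matrix.toEuclideanLin (Q i) v)
    have h2 := norm_apply_le (Q i) v
    have h3 := hQn i
    have h4 := matNorm_nonneg (Q i)
    nlinarith [norm_nonneg v, norm_nonneg (Matrix.toEuclideanLin (Q i) v)]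
  -- quadratic form bound for P (backward induction)
  have hPb : ∀ t, t ≤ N → ∀ i (v : EuclideanSpace ℝ (Fin d)),
      ⟪v, Matrix.toEuclideanLin (P i (N - t)) v⟫
        ≤ (δmax * ∑ s ∈ range (t + 1), α ^ (2 * s)) * ‖v‖ ^ 2 := by
    intro t
    induction t with
    | zero =>
      intro _ i v
      simpa [hPN i] using hQb i v
    | succ t ih =>
      intro ht i v
      have hk : N - (t + 1) < N := by omega
      have hk1 : N - (t + 1) + 1 = N - t := by omega
      set k := N - (t + 1) with hkdef
      have hP' : (P i (k + 1)).PosSemidef := hPsd (k + 1) (by omega) i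
      have hPt' : (P i (k + 1))ᵀ = P i (k + 1) := by rw [← conjT_eq_transpose, hP'.1]
      have hGt : ((B i)ᵀ * P i (k + 1) * A i)ᵀ = (A i)ᵀ * P i (k + 1) * B i := by
        simp [Matrix.transpose_mul, hPt', Matrix.mul_assoc]
      have hM : ((B i)ᵀ * P i (k + 1) * B i + R i + lam k • H i).PosDef := by
        rw [add_assoc]
        exact Matrix.PosDef.posSemidef_add (psd_transpose_mul_mul hP' (B i)) (hSpd i k hk)
      have hD : ((A i)ᵀ * P i (k + 1) * B i
          * ((B i)ᵀ * P i (k + 1) * B i + R i + lam k • H i)⁻¹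
          * ((B i)ᵀ * P i (k + 1) * A i)).PosSemidef := by
        rw [← hGt]
        exact psd_transpose_mul_mul hM.inv.posSemidef _
      rw [hPrec i k hk]
      have hexp : ⟪v, Matrix.toEuclideanLin ((A i)ᵀ * P i (k + 1) * A i + Q i
          - (A i)ᵀ * P i (k + 1) * B i
            * ((B i)ᵀ * P i (k + 1) * B i + R i + lam k • H i)⁻¹
            * ((B i)ᵀ * P i (k + 1) * A i)) v⟫
          = ⟪Matrix.toEuclideanLin (A i) v,
              Matrix.toEuclideanLin (P i (k + 1)) (Matrix.toEuclideanLin (A i) v)⟫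
            + ⟪v, Matrix.toEuclideanLin (Q i) v⟫
            - ⟪v, Matrix.toEuclideanLin ((A i)ᵀ * P i (k + 1) * B i
                * ((B i)ᵀ * P i (k + 1) * B i + R i + lam k • H i)⁻¹
                * ((B i)ᵀ * P i (k + 1) * A i)) v⟫ := by
        rw [map_sub, map_add, LinearMap.sub_apply, LinearMap.add_apply,
          inner_sub_right, inner_add_right]
        congr 1
        rw [Matrix.mul_assoc ((A i)ᵀ) (P i (k + 1)) (A i), toEuclideanLin_mul,
          inner_transpose', toEuclideanLin_mul]
      rw [hexp]
      have hAv : ‖Matrix.toEuclideanLin (A i) v‖ ≤ α * ‖v‖ := by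
        have h1 := norm_apply_le (A i) v
        have h2 := hA i
        nlinarith [norm_nonneg v, matNorm_nonneg (A i)]
      have hsum_nn : (0:ℝ) ≤ δmax * ∑ s ∈ range (t + 1), α ^ (2 * s) := by positivity
      have hih : ⟪Matrix.toEuclideanLin (A i) v,
          Matrix.toEuclideanLin (P i (k + 1)) (Matrix.toEuclideanLin (A i) v)⟫
          ≤ (δmax * ∑ s ∈ range (t + 1), α ^ (2 * s)) * (α * ‖v‖) ^ 2 := by
        have := ih (by omega) i (Matrix.toEuclideanLin (A i) v)
        rw [show N - t = k + 1 by omega] at this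
        refine this.trans ?_
        have : ‖Matrix.toEuclideanLin (A i) v‖ ^ 2 ≤ (α * ‖v‖) ^ 2 := by
          nlinarith [norm_nonneg (Matrix.toEuclideanLin (A i) v)]
        nlinarith
      have hQv := hQb i v
      have hDv := inner_psd_nonneg hD v
      rw [ck_succ δmax α t]
      nlinarith [norm_nonneg v]
  -- control norm bound
  have hUb : ∀ k, k < N → ∀ i, ‖u i k‖ ≤ Real.sqrt (C k / ρ) := by
    intro k hk i
    have hHnn : ∀ j, (0:ℝ) ≤ ⟪u j k, Matrix.toEuclideanLin (H j) (u j k)⟫ := fun j =>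
      inner_psd_nonneg (hHpd j).posSemidef (u j k)
    have hle : ⟪u i k, Matrix.toEuclideanLin (H i) (u i k)⟫ ≤ C k := by
      rw [← hbal k hk]
      exact Finset.single_le_sum (fun j _ => hHnn j) (Finset.mem_univ i)
    have hlow : ρ * ‖u i k‖ ^ 2 ≤ ⟪u i k, Matrix.toEuclideanLin (H i) (u i k)⟫ := by
      have h0 := inner_psd_nonneg (hHρ i) (u i k)
      have he : ⟪u i k, Matrix.toEuclideanLin (H i - ρ • (1 : Matrix (Fin m) (Fin m) ℝ)) (u i k)⟫
          = ⟪u i k, Matrix.toEuclideanLin (H i) (u i k)⟫ - ρ * ‖u i k‖ ^ 2 := by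
        rw [map_sub, LinearMap.sub_apply, inner_sub_right, _root_.map_smul, LinearMap.smul_apply,
          inner_smul_right, toEuclideanLin_one', real_inner_self_eq_norm_sq]
      rw [he] at h0
      linarith
    have h1 : ‖u i k‖ ^ 2 ≤ C k / ρ := by
      rw [le_div_iff₀ hρ]
      nlinarith
    calc ‖u i k‖ = Real.sqrt (‖u i k‖ ^ 2) := by
          rw [Real.sqrt_sq (norm_nonneg _)]
      _ ≤ Real.sqrt (C k / ρ) := Real.sqrt_le_sqrt h1
  -- state norm bound
  have hXb : ∀ k, k ≤ N → ∀ i, ‖x i k‖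
      ≤ γ * α ^ k + β * ∑ j ∈ range k, Real.sqrt (C j / ρ) * α ^ (k - 1 - j) := by
    intro k
    induction k with
    | zero => intro _ i; simpa using hx0 i
    | succ k ih =>
      intro hk i
      have hkN : k < N := by omega
      have hxk := ih (by omega) i
      have huk := hUb k hkN i
      have h1 : ‖x i (k + 1)‖ ≤ α * ‖x i k‖ + β * ‖u i k‖ := by
        rw [hxdyn i k hkN]
        refine (norm_add_le _ _).trans ?_
        have h2 := norm_apply_le (A i) (x i k)
        have h3 := norm_apply_le (B i) (u i k)
        have h4 := hA i
        have h5 := hB i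
        have := matNorm_nonneg (A i); have := matNorm_nonneg (B i)
        nlinarith [norm_nonneg (x i k), norm_nonneg (u i k)]
      have hkey : γ * α ^ (k + 1) + β * ∑ j ∈ range (k + 1),
            Real.sqrt (C j / ρ) * α ^ (k + 1 - 1 - j)
          = α * (γ * α ^ k + β * ∑ j ∈ range k, Real.sqrt (C j / ρ) * α ^ (k - 1 - j))
            + β * Real.sqrt (C k / ρ) := by
        rw [Finset.sum_range_succ]
        have he : ∀ j ∈ range k, Real.sqrt (C j / ρ) * α ^ (k + 1 - 1 - j)
            = α * (Real.sqrt (C j / ρ) * α ^ (k - 1 - j)) := by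
          intro j hj
          rw [Finset.mem_range] at hj
          rw [show k + 1 - 1 - j = (k - 1 - j) + 1 by omega, pow_succ]
          ring
        rw [Finset.sum_congr rfl he, show k + 1 - 1 - k = 0 by omega]
        simp only [pow_zero, mul_one, ← Finset.mul_sum]
        ring
      rw [hkey]
      have hxknn : (0:ℝ) ≤ ‖x i k‖ := norm_nonneg _
      have huknn : (0:ℝ) ≤ ‖u i k‖ := norm_nonneg _
      nlinarith
  -- main estimate
  intro k hk
  set Xk : ℝ := γ * α ^ k + β * ∑ j ∈ range k, Real.sqrt (C j / ρ) * α ^ (k - 1 - j) with hXkdef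
  set ck1 : ℝ := δmax * ∑ s ∈ range (N - k), α ^ (2 * s) with hck1def
  have hck1nn : (0:ℝ) ≤ ck1 := by positivity
  have hXknn : (0:ℝ) ≤ Xk := by positivity
  have hCk := hC k hk
  have hPbk : ∀ (v : EuclideanSpace ℝ (Fin d)) (i : Fin n),
      ⟪v, Matrix.toEuclideanLin (P i (k + 1)) v⟫ ≤ ck1 * ‖v‖ ^ 2 := by
    intro v i
    have := hPb (N - (k + 1)) (by omega) i v
    rw [show N - (N - (k + 1)) = k + 1 by omega,
      show N - (k + 1) + 1 = N - k by omega] at this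
    exact this
  -- per-agent estimate
  have stepA : ∀ i, lam k * ⟪u i k, Matrix.toEuclideanLin (H i) (u i k)⟫
      ≤ ck1 * (β * Real.sqrt (C k / ρ)) * (α * Xk) := by
    intro i
    have hP' : (P i (k + 1)).PosSemidef := hPsd (k + 1) (by omega) i
    have hPt' : (P i (k + 1))ᵀ = P i (k + 1) := by rw [← conjT_eq_transpose, hP'.1]
    have hM : ((B i)ᵀ * P i (k + 1) * B i + R i + lam k • H i).PosDef := by
      rw [add_assoc]
      exact Matrix.PosDef.posSemidef_add (psd_transpose_mul_mul hP' (B i)) (hSpd i k hk)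
    have hdet : IsUnit ((B i)ᵀ * P i (k + 1) * B i + R i + lam k • H i).det :=
      (Matrix.isUnit_iff_isUnit_det _).mp hM.isUnit
    have hMu : Matrix.toEuclideanLin ((B i)ᵀ * P i (k + 1) * B i + R i + lam k • H i) (u i k)
        = - Matrix.toEuclideanLin ((B i)ᵀ * P i (k + 1) * A i) (x i k) := by
      rw [hu i k hk, map_neg, ← toEuclideanLin_mul,
        Matrix.mul_nonsing_inv_cancel_left _ _ hdet]
    have hdec : ⟪u i k, Matrix.toEuclideanLin
          ((B i)ᵀ * P i (k + 1) * B i + R i + lam k • H i) (u i k)⟫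
        = ⟪u i k, Matrix.toEuclideanLin ((B i)ᵀ * P i (k + 1) * B i) (u i k)⟫
          + ⟪u i k, Matrix.toEuclideanLin (R i) (u i k)⟫
          + lam k * ⟪u i k, Matrix.toEuclideanLin (H i) (u i k)⟫ := by
      rw [map_add, LinearMap.add_apply, inner_add_right, map_add, LinearMap.add_apply,
        inner_add_right, _root_.map_smul, LinearMap.smul_apply, inner_smul_right]
    have hXnn := inner_psd_nonneg (psd_transpose_mul_mul hP' (B i)) (u i k)
    have hRnn := inner_psd_nonneg (hR i).posSemidef (u i k)
    have h3 : ⟪u i k, Matrix.toEuclideanLin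
          ((B i)ᵀ * P i (k + 1) * B i + R i + lam k • H i) (u i k)⟫
        = - ⟪Matrix.toEuclideanLin (B i) (u i k),
            Matrix.toEuclideanLin (P i (k + 1)) (Matrix.toEuclideanLin (A i) (x i k))⟫ := by
      rw [hMu, inner_neg_right]
      congr 1
      rw [Matrix.mul_assoc ((B i)ᵀ) (P i (k + 1)) (A i), toEuclideanLin_mul,
        inner_transpose', toEuclideanLin_mul]
    have habs : |⟪Matrix.toEuclideanLin (B i) (u i k),
          Matrix.toEuclideanLin (P i (k + 1)) (Matrix.toEuclideanLin (A i) (x i k))⟫|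
        ≤ ck1 * ‖Matrix.toEuclideanLin (B i) (u i k)‖
            * ‖Matrix.toEuclideanLin (A i) (x i k)‖ :=
      inner_abs_le hP' hck1nn (fun v => hPbk v i) _ _
    have hBu : ‖Matrix.toEuclideanLin (B i) (u i k)‖ ≤ β * Real.sqrt (C k / ρ) := by
      have h1 := norm_apply_le (B i) (u i k)
      have h2 := hB i
      have h4 := hUb k hk i
      nlinarith [norm_nonneg (u i k), matNorm_nonneg (B i), Real.sqrt_nonneg (C k / ρ)]
    have hAx : ‖Matrix.toEuclideanLin (A i) (x i k)‖ ≤ α * Xk := by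
      have h1 := norm_apply_le (A i) (x i k)
      have h2 := hA i
      have h4 := hXb k (by omega) i
      rw [← hXkdef] at h4
      nlinarith [norm_nonneg (x i k), matNorm_nonneg (A i)]
    have hfinal : ck1 * ‖Matrix.toEuclideanLin (B i) (u i k)‖
          * ‖Matrix.toEuclideanLin (A i) (x i k)‖
        ≤ ck1 * (β * Real.sqrt (C k / ρ)) * (α * Xk) := by
      have n2 := norm_nonneg (Matrix.toEuclideanLin (A i) (x i k))
      calc ck1 * ‖Matrix.toEuclideanLin (B i) (u i k)‖ * ‖Matrix.toEuclideanLin (A i) (x i k)‖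
          ≤ ck1 * (β * Real.sqrt (C k / ρ)) * ‖Matrix.toEuclideanLin (A i) (x i k)‖ :=
            mul_le_mul_of_nonneg_right (mul_le_mul_of_nonneg_left hBu hck1nn) n2
        _ ≤ ck1 * (β * Real.sqrt (C k / ρ)) * (α * Xk) :=
            mul_le_mul_of_nonneg_left hAx (by positivity)
    have hchain : lam k * ⟪u i k, Matrix.toEuclideanLin (H i) (u i k)⟫
        ≤ ⟪u i k, Matrix.toEuclideanLin
            ((B i)ᵀ * P i (k + 1) * B i + R i + lam k • H i) (u i k)⟫ := by
      rw [hdec]; linarith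
    refine hchain.trans ?_
    rw [h3]
    exact (neg_le_abs _).trans (habs.trans hfinal)
  -- sum over agents
  have stepB : lam k * C k ≤ n * (ck1 * (β * Real.sqrt (C k / ρ)) * (α * Xk)) := by
    have h1 : lam k * C k = ∑ i, lam k * ⟪u i k, Matrix.toEuclideanLin (H i) (u i k)⟫ := by
      rw [← Finset.mul_sum, hbal k hk]
    rw [h1]
    refine le_trans (Finset.sum_le_sum fun i _ => stepA i) ?_
    rw [Finset.sum_const, Finset.card_univ, Fintype.card_fin, nsmul_eq_mul]
  -- the price condition (unified form)
  have hcond : δmax * ∑ t ∈ Icc (k + 1) N,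
        (γ * α ^ (2 * t - k - 1)
          + β * ∑ j ∈ range k, Real.sqrt (C j / ρ) * α ^ (2 * t - j - k - 2))
      ≤ (Real.sqrt (C k * ρ) / (n * β)) * lamDag := by
    rcases Nat.eq_zero_or_pos k with rfl | hk1
    · have : ∀ t ∈ Icc (0 + 1) N,
          γ * α ^ (2 * t - 0 - 1)
            + β * ∑ j ∈ range 0, Real.sqrt (C j / ρ) * α ^ (2 * t - j - 0 - 2)
          = γ * α ^ (2 * t - 1) := by
        intro t _; simp
      rw [Finset.sum_congr rfl this]
      simpa using hcond0
    · exact hcondk k hk1 hk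
  -- identity relating the two expressions
  have hE : ck1 * (α * Xk) = δmax * ∑ t ∈ Icc (k + 1) N,
      (γ * α ^ (2 * t - k - 1)
        + β * ∑ j ∈ range k, Real.sqrt (C j / ρ) * α ^ (2 * t - j - k - 2)) := by
    rw [← Finset.Ico_add_one_right_eq_Icc, Finset.sum_Ico_eq_sum_range,
      show N + 1 - (k + 1) = N - k by omega, hck1def, mul_assoc δmax, Finset.sum_mul]
    congr 1
    refine Finset.sum_congr rfl fun s _ => ?_
    have e2 : ∀ j ∈ range k,
        Real.sqrt (C j / ρ) * α ^ (2 * (k + 1 + s) - j - k - 2)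
        = Real.sqrt (C j / ρ) * (α ^ (k - 1 - j) * α ^ (2 * s + 1)) := by
      intro j hj
      rw [Finset.mem_range] at hj
      rw [show 2 * (k + 1 + s) - j - k - 2 = (k - 1 - j) + (2 * s + 1) by omega, pow_add]
    rw [show 2 * (k + 1 + s) - k - 1 = k + (2 * s + 1) by omega, Finset.sum_congr rfl e2,
      pow_add,
      show (∑ j ∈ range k, Real.sqrt (C j / ρ) * (α ^ (k - 1 - j) * α ^ (2 * s + 1)))
        = (∑ j ∈ range k, Real.sqrt (C j / ρ) * α ^ (k - 1 - j)) * α ^ (2 * s + 1) from by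
          rw [Finset.sum_mul]; exact Finset.sum_congr rfl fun j _ => by ring,
      hXkdef]
    ring
  -- put everything together
  have hnpos : (0:ℝ) < n := by exact_mod_cast hn
  have hsqrts : Real.sqrt (C k / ρ) * Real.sqrt (C k * ρ) = C k := by
    rw [← Real.sqrt_mul (by positivity : (0:ℝ) ≤ C k / ρ),
      show C k / ρ * (C k * ρ) = (C k) ^ 2 by field_simp]
    exact Real.sqrt_sq hCk.le
  have hfin : lam k * C k ≤ C k * lamDag := by
    calc lam k * C k ≤ n * (ck1 * (β * Real.sqrt (C k / ρ)) * (α * Xk)) := stepB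
      _ = (n * β * Real.sqrt (C k / ρ)) * (ck1 * (α * Xk)) := by ring
      _ = (n * β * Real.sqrt (C k / ρ)) * (δmax * ∑ t ∈ Icc (k + 1) N,
            (γ * α ^ (2 * t - k - 1)
              + β * ∑ j ∈ range k, Real.sqrt (C j / ρ) * α ^ (2 * t - j - k - 2))) := by
          rw [hE]
      _ ≤ (n * β * Real.sqrt (C k / ρ))
            * ((Real.sqrt (C k * ρ) / (n * β)) * lamDag) := by
          exact mul_le_mul_of_nonneg_left hcond (by positivity)
      _ = (Real.sqrt (C k / ρ) * Real.sqrt (C k * ρ)) * lamDag := by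
          field_simp
      _ = C k * lamDag := by rw [hsqrts]
  exact le_of_mul_le_mul_right (by linarith : lam k * C k ≤ lamDag * C k) hCk
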